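/- Let E be a locally convex Hausdorff real topological vector space, let F be a real Banach lattice, and let r, s ∈ ℝ with s ≠ −r; define Φ : F → F by Φ(f) = r•f⁺ + s•f⁻. Then the linear span of { Φ ∘ g : g ∈ Aff(E, F) } is dense in C(E, F) with the compact-open topology. In particular, the linear sublattice of C(E, F) generated by Aff(E, F) is dense in C(E, F). -/

import Mathlib

open Set

-- PL approximation

noncomputable def ppCM (a : ℝ) : C(ℝ, ℝ) :=
  ⟨fun t => max (t - a) 0, by continuity⟩

noncomputable def PLgen : Set C(ℝ, ℝ) :=
  {(1 : C(ℝ, ℝ)), ContinuousMap.id ℝ} ∪ Set.range ppCM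

lemma pl_approx (η : C(ℝ, ℝ)) {R ε : ℝ} (hR : 0 < R) (hε : 0 < ε) :
    ∃ q ∈ Submodule.span ℝ PLgen, ∀ t ∈ Icc (-R) R, |η t - q t| ≤ ε := by
  -- uniform continuity modulus
  obtain ⟨δ, hδ0, hδ⟩ : ∃ δ > 0, ∀ u ∈ Icc (-R) R, ∀ v ∈ Icc (-R) R,
      dist u v < δ → dist (η u) (η v) < ε / 2 := by
    have := (isCompact_Icc (a := -R) (b := R)).uniformContinuousOn_of_continuous
      (η.continuous.continuousOn)
    rw [Metric.uniformContinuousOn_iff] at this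
    exact this (ε / 2) (by linarith)
  obtain ⟨N, hN⟩ := exists_nat_gt (2 * R / δ)
  have hN0 : 0 < N := by
    by_contra h
    push_neg at h
    interval_cases N
    · simp at hN
      nlinarith [div_pos (by linarith : (0:ℝ) < 2 * R) hδ0]
  have hNR : (0:ℝ) < N := by exact_mod_cast hN0
  set h : ℝ := 2 * R / N with hh
  have hh0 : 0 < h := by positivity
  have hhδ : h < δ := by
    rw [hh, div_lt_iff₀ hNR]
    nlinarith [(div_lt_iff₀ hδ0).mp hN]
  set a : ℕ → ℝ := fun i => -R + i * h with ha
  have ha0 : a 0 = -R := by simp [ha]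
  have haN : a N = R := by
    simp only [ha, hh]
    field_simp
    ring
  have hmono : ∀ i j : ℕ, i ≤ j → a i ≤ a j := by
    intro i j hij
    simp only [ha]
    have : (i:ℝ) ≤ j := by exact_mod_cast hij
    nlinarith
  have hstep : ∀ i : ℕ, a (i + 1) = a i + h := by
    intro i; simp only [ha]; push_cast; ring
  set m : ℕ → ℝ := fun i => (η (a (i + 1)) - η (a i)) / h with hm
  set ramp : ℕ → C(ℝ, ℝ) := fun i => ppCM (a i) - ppCM (a (i + 1)) with hramp
  set q : C(ℝ, ℝ) := ContinuousMap.const ℝ (η (a 0)) + ∑ i ∈ Finset.range N, m i • ramp i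
    with hq
  have hqmem : q ∈ Submodule.span ℝ PLgen := by
    apply Submodule.add_mem
    · have : ContinuousMap.const ℝ (η (a 0)) = η (a 0) • (1 : C(ℝ, ℝ)) := by
        ext t; simp
      rw [this]
      exact Submodule.smul_mem _ _ (Submodule.subset_span (Or.inl (by simp)))
    · apply Submodule.sum_mem
      intro i _
      apply Submodule.smul_mem
      apply Submodule.sub_mem <;>
        exact Submodule.subset_span (Or.inr ⟨_, rfl⟩)
  refine ⟨q, hqmem, ?_⟩
  intro t ht
  -- find the segment
  obtain ⟨j, hjN, hjt, htj⟩ : ∃ j, j < N ∧ a j ≤ t ∧ t ≤ a (j + 1) := by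
    set u : ℝ := (t + R) / h with hu
    have hu0 : 0 ≤ u := by
      apply div_nonneg _ hh0.le
      have := ht.1; linarith
    refine ⟨min ⌊u⌋₊ (N - 1), ?_, ?_, ?_⟩
    · have : min ⌊u⌋₊ (N - 1) ≤ N - 1 := min_le_right _ _
      omega
    · rcases le_total (⌊u⌋₊ : ℕ) (N - 1) with hc | hc
      · rw [min_eq_left hc]
        have h1 : (⌊u⌋₊ : ℝ) ≤ u := Nat.floor_le hu0
        simp only [ha]
        rw [hu] at h1
        have := (le_div_iff₀ hh0).mp h1
        linarith
      · rw [min_eq_right hc]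
        have h1 : ((N - 1 : ℕ) : ℝ) ≤ ⌊u⌋₊ := by exact_mod_cast hc
        have h2 : (⌊u⌋₊ : ℝ) ≤ u := Nat.floor_le hu0
        simp only [ha]
        have := (le_div_iff₀ hh0).mp (le_trans h1 h2)
        linarith
    · rcases le_total (⌊u⌋₊ : ℕ) (N - 1) with hc | hc
      · rw [min_eq_left hc]
        have h1 : u < ⌊u⌋₊ + 1 := Nat.lt_floor_add_one u
        simp only [ha]
        rw [hu] at h1
        have := (div_lt_iff₀ hh0).mp h1
        push_cast
        nlinarith
      · rw [min_eq_right hc]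
        have : N - 1 + 1 = N := by omega
        rw [this, haN]
        exact ht.2
  -- evaluate q on the segment
  have hrampeval : ∀ i, (ramp i) t = max (t - a i) 0 - max (t - a (i + 1)) 0 := by
    intro i; simp [hramp, ppCM]
  have hsum : q t = η (a j) + m j * (t - a j) := by
    have hqt : q t = η (a 0) + ∑ i ∈ Finset.range N, m i * ((ramp i) t) := by
      simp [hq]
    rw [hqt]
    have hsplit : ∀ i ∈ Finset.range N,
        m i * ((ramp i) t) = (if i < j then η (a (i+1)) - η (a i) else
          (if i = j then m j * (t - a j) else 0)) := by
      intro i _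
      rw [hrampeval i]
      rcases lt_trichotomy i j with hij | hij | hij
      · rw [if_pos hij]
        have h1 : a (i + 1) ≤ t := le_trans (hmono _ _ hij) hjt
        have h2 : a i ≤ t := le_trans (hmono _ _ (Nat.le_of_lt hij)) hjt
        rw [max_eq_left (by linarith), max_eq_left (by linarith)]
        have : t - a i - (t - a (i+1)) = h := by rw [hstep i]; ring
        rw [this, hm]
        field_simp
      · subst hij
        rw [if_neg (lt_irrefl i), if_pos rfl]
        rw [max_eq_left (by linarith), max_eq_right (by linarith)]
        ring
      · rw [if_neg (by omega), if_neg (by omega)]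
        have h1 : t ≤ a i := le_trans htj (hmono _ _ hij)
        have h2 : t ≤ a (i + 1) := le_trans h1 (hmono _ _ (Nat.le_succ i))
        rw [max_eq_right (by linarith), max_eq_right (by linarith)]
        ring
    rw [Finset.sum_congr rfl hsplit]
    rw [Finset.sum_ite]
    have e1 : (Finset.range N).filter (fun i => i < j) = Finset.range j := by
      ext i; simp [Finset.mem_filter, Finset.mem_range]; omega
    rw [e1]
    have e2 : ∑ i ∈ Finset.range j, (η (a (i+1)) - η (a i)) = η (a j) - η (a 0) :=
      Finset.sum_range_sub (fun i => η (a i)) j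
    rw [e2]
    have e3 : ∑ i ∈ (Finset.range N).filter (fun i => ¬ i < j),
        (if i = j then m j * (t - a j) else 0) = m j * (t - a j) := by
      rw [Finset.sum_eq_single_of_mem j (by simp [Finset.mem_filter, Finset.mem_range]; omega)]
      · simp
      · intro b _ hbj; simp [hbj]
    rw [e3]
    ring
  -- bound
  have haj : a j ∈ Icc (-R) R := by
    constructor
    · rw [← ha0]; exact hmono _ _ (Nat.zero_le _)
    · rw [← haN]; exact hmono _ _ hjN.le
  have haj1 : a (j+1) ∈ Icc (-R) R := by
    constructor
    · rw [← ha0]; exact hmono _ _ (Nat.zero_le _)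
    · rw [← haN]; exact hmono _ _ hjN
  have htIcc : t ∈ Icc (-R) R := ht
  have hd1 : |η t - η (a j)| < ε / 2 := by
    have := hδ t htIcc (a j) haj ?_
    · rwa [Real.dist_eq] at this
    · rw [Real.dist_eq]
      rw [abs_of_nonneg (by linarith)]
      have := hstep j
      linarith
  have hd2 : |m j * (t - a j)| ≤ ε / 2 := by
    rw [abs_mul, hm, abs_div]
    have hmj : |η (a (j+1)) - η (a j)| ≤ ε / 2 := by
      have := hδ (a (j+1)) haj1 (a j) haj ?_
      · rw [Real.dist_eq] at this; linarith
      · rw [Real.dist_eq, hstep j]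
        rw [abs_of_nonneg (by linarith)]
        linarith
    have htaj : |t - a j| ≤ h := by
      rw [abs_of_nonneg (by linarith)]
      have := hstep j
      linarith
    rw [abs_of_pos hh0]
    calc |η (a (j+1)) - η (a j)| / h * |t - a j|
        ≤ |η (a (j+1)) - η (a j)| / h * h := by
          apply mul_le_mul_of_nonneg_left htaj (by positivity)
      _ = |η (a (j+1)) - η (a j)| := by field_simp
      _ ≤ ε / 2 := hmj
  calc |η t - q t| = |(η t - η (a j)) - m j * (t - a j)| := by rw [hsum]; ring_nf
    _ ≤ |η t - η (a j)| + |m j * (t - a j)| := abs_sub _ _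
    _ ≤ ε := by linarith

section Helpers
variable {F : Type*} [NormedAddCommGroup F] [Lattice F] [IsOrderedAddMonoid F] [HasSolidNorm F] [NormedSpace ℝ F] [PosSMulStrictMono ℝ F] [PosSMulReflectLT ℝ F]

lemma smul_sup_zero' {c : F} (hc : 0 ≤ c) (u : ℝ) : (u • c) ⊔ 0 = max u 0 • c := by
  rcases le_total 0 u with h | h
  · rw [sup_eq_left.2 (smul_nonneg h hc), max_eq_left h]
  · rw [sup_eq_right.2 (smul_nonpos_of_nonpos_of_nonneg h hc), max_eq_right h, zero_smul]

lemma abs_smul_of_nonneg' {c : F} (hc : 0 ≤ c) (u : ℝ) : |u • c| = |u| • c := by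
  rcases le_total 0 u with h | h
  · rw [abs_of_nonneg (smul_nonneg h hc), abs_of_nonneg h]
  · rw [abs_of_nonpos (smul_nonpos_of_nonpos_of_nonneg h hc), abs_of_nonpos h, neg_smul]

lemma sup_zero_add_neg_sup_zero (a : F) : a ⊔ 0 + (-a) ⊔ 0 = |a| := by
  rw [← posPart_def, ← negPart_def, posPart_add_negPart]
end Helpers

section Main
variable {E : Type*} [AddCommGroup E] [Module ℝ E] [TopologicalSpace E]
    [IsTopologicalAddGroup E] [ContinuousSMul ℝ E] [LocallyConvexSpace ℝ E] [T2Space E]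
    {F : Type*} [NormedAddCommGroup F] [Lattice F] [IsOrderedAddMonoid F] [HasSolidNorm F] [CompleteSpace F] [NormedSpace ℝ F]
    [PosSMulStrictMono ℝ F] [PosSMulReflectLT ℝ F]

variable (Φ : F → F) (r s : ℝ)

/-- the span under consideration -/
noncomputable def Vspan (E : Type*) [AddCommGroup E] [Module ℝ E] [TopologicalSpace E]
    {F : Type*} [NormedAddCommGroup F] [Lattice F] [IsOrderedAddMonoid F] [HasSolidNorm F] [NormedSpace ℝ F] (Φ : F → F) :
    Submodule ℝ C(E, F) :=
  Submodule.span ℝ {h : C(E, F) | ∃ (T : E →L[ℝ] F) (b : F), ∀ x : E, h x = Φ (T x + b)}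

/-- |ℓ x + t| • c as a continuous map -/
noncomputable def habsCM (E : Type*) [AddCommGroup E] [Module ℝ E] [TopologicalSpace E]
    {F : Type*} [NormedAddCommGroup F] [Lattice F] [IsOrderedAddMonoid F] [HasSolidNorm F] [NormedSpace ℝ F]
    (ℓ : E →L[ℝ] ℝ) (t : ℝ) (c : F) : C(E, F) :=
  ⟨fun x => |ℓ x + t| • c,
    (ℓ.continuous.add continuous_const).abs.smul continuous_const⟩

/-- the affine composition as a continuous map -/
noncomputable def phiComp (T : E →L[ℝ] F) (b : F) : C(E, F) :=
  ⟨fun x => r • ((T x + b) ⊔ 0) + s • ((-(T x + b)) ⊔ 0), by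
    have h1 : Continuous fun x : E => T x + b := T.continuous.add continuous_const
    exact ((h1.sup continuous_const).const_smul r).add
      ((h1.neg.sup continuous_const).const_smul s)⟩

variable {Φ r s}

lemma phiComp_mem (hΦ : ∀ f : F, Φ f = r • (f ⊔ 0) + s • ((-f) ⊔ 0)) (T : E →L[ℝ] F) (b : F) :
    phiComp r s T b ∈ {h : C(E, F) | ∃ (T : E →L[ℝ] F) (b : F), ∀ x : E, h x = Φ (T x + b)} :=
  ⟨T, b, fun x => (hΦ _).symm⟩

variable (hrs : s ≠ -r) (hΦ : ∀ f : F, Φ f = r • (f ⊔ 0) + s • ((-f) ⊔ 0))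

include hrs hΦ

lemma const_mem_V (v : F) : ContinuousMap.const E v ∈ Vspan E Φ := by
  have key : ∀ v : F, 0 ≤ v → ContinuousMap.const E v ∈ Vspan E Φ := by
    intro v hv
    have hrs0 : r ≠ 0 ∨ s ≠ 0 := by
      by_contra hc
      push_neg at hc
      exact hrs (by rw [hc.1, hc.2]; ring)
    rcases hrs0 with hr | hs
    · have h1 : phiComp r s (0 : E →L[ℝ] F) v = ContinuousMap.const E (r • v) := by
        ext x
        simp only [phiComp, ContinuousMap.coe_mk, ContinuousLinearMap.zero_apply, zero_add,
          ContinuousMap.const_apply]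
        rw [sup_eq_left.2 hv, sup_eq_right.2 (neg_nonpos.2 hv), smul_zero, add_zero]
      have h2 : ContinuousMap.const E v = r⁻¹ • ContinuousMap.const E (r • v) := by
        ext x; simp [smul_smul, inv_mul_cancel₀ hr]
      rw [h2, ← h1]
      exact Submodule.smul_mem _ _ (Submodule.subset_span (phiComp_mem hΦ 0 v))
    · have h1 : phiComp r s (0 : E →L[ℝ] F) (-v) = ContinuousMap.const E (s • v) := by
        ext x
        simp only [phiComp, ContinuousMap.coe_mk, ContinuousLinearMap.zero_apply, zero_add,
          ContinuousMap.const_apply, neg_neg]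
        rw [sup_eq_right.2 (neg_nonpos.2 hv), sup_eq_left.2 hv, smul_zero, zero_add]
      have h2 : ContinuousMap.const E v = s⁻¹ • ContinuousMap.const E (s • v) := by
        ext x; simp [smul_smul, inv_mul_cancel₀ hs]
      rw [h2, ← h1]
      exact Submodule.smul_mem _ _ (Submodule.subset_span (phiComp_mem hΦ 0 (-v)))
  have : ContinuousMap.const E v = ContinuousMap.const E (v⁺) - ContinuousMap.const E (v⁻) := by
    ext x; simp [posPart_sub_negPart]
  rw [this]
  exact Submodule.sub_mem _ (key _ (posPart_nonneg v)) (key _ (negPart_nonneg v))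

/-- |ℓ x + t| • c is in the span, for c ≥ 0 -/
lemma habs_mem_V (ℓ : E →L[ℝ] ℝ) (t : ℝ) {c : F} (hc : 0 ≤ c) :
    habsCM E ℓ t c ∈ Vspan E Φ := by
  have hrs' : r + s ≠ 0 := fun hcon => hrs (by linarith)
  set g : E →L[ℝ] F := ℓ.smulRight c with hg
  have key : habsCM E ℓ t c =
      (r + s)⁻¹ • (phiComp r s g (t • c) + phiComp r s (-g) (-(t • c))) := by
    ext x
    have hgx : g x = ℓ x • c := rfl
    have hu : g x + t • c = (ℓ x + t) • c := by rw [hgx, add_smul]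
    simp only [habsCM, ContinuousMap.coe_mk, ContinuousMap.smul_apply, ContinuousMap.add_apply]
    set u : F := (ℓ x + t) • c with hu'
    have h2 : (phiComp r s g (t • c)) x = r • (u ⊔ 0) + s • ((-u) ⊔ 0) := by
      simp only [phiComp, ContinuousMap.coe_mk, hu]
    have h3 : (phiComp r s (-g) (-(t • c))) x = r • ((-u) ⊔ 0) + s • (u ⊔ 0) := by
      simp only [phiComp, ContinuousMap.coe_mk, ContinuousLinearMap.neg_apply]
      rw [show -g x + -(t • c) = -(g x + t • c) by abel, hu, neg_neg]
    rw [h2, h3]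
    have : r • (u ⊔ 0) + s • ((-u) ⊔ 0) + (r • ((-u) ⊔ 0) + s • (u ⊔ 0))
        = (r + s) • (u ⊔ 0 + (-u) ⊔ 0) := by
      rw [smul_add, add_smul, add_smul]; abel
    rw [this, sup_zero_add_neg_sup_zero, hu', abs_smul_of_nonneg' hc, smul_smul, smul_smul]
    congr 1
    field_simp
  rw [key]
  exact Submodule.smul_mem _ _ (Submodule.add_mem _
    (Submodule.subset_span (phiComp_mem hΦ g (t • c)))
    (Submodule.subset_span (phiComp_mem hΦ (-g) (-(t • c)))))

section CompactPart
variable (K : Set E) [CompactSpace K]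

/-- restriction as a linear map -/
noncomputable def resL : C(E, F) →ₗ[ℝ] C(↥K, F) where
  toFun f := f.restrict K
  map_add' f g := rfl
  map_smul' c f := rfl

variable (Φ) in
/-- image of the span under restriction -/
noncomputable def Vres : Submodule ℝ C(↥K, F) := (Vspan E Φ).map (resL K)

/-- (ℓ x + t) • c on K -/
noncomputable def glinCM (ℓ : E →L[ℝ] ℝ) (t : ℝ) (c : F) : C(↥K, F) :=
  ⟨fun x : ↥K => (ℓ (x : E) + t) • c,
    ((ℓ.continuous.comp continuous_subtype_val).add continuous_const).smul continuous_const⟩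

/-- max (ℓ x + t) 0 • c on K -/
noncomputable def reluCM (ℓ : E →L[ℝ] ℝ) (t : ℝ) (c : F) : C(↥K, F) :=
  ⟨fun x : ↥K => max (ℓ (x : E) + t) 0 • c,
    (((ℓ.continuous.comp continuous_subtype_val).add continuous_const).max
      continuous_const).smul continuous_const⟩

lemma glin_mem_Vres (ℓ : E →L[ℝ] ℝ) (t : ℝ) {c : F} (hc : 0 ≤ c) :
    glinCM K ℓ t c ∈ Vres Φ K := by
  obtain ⟨C, hC⟩ := (isCompact_iff_compactSpace.mpr ‹_› : IsCompact K).exists_bound_of_continuousOn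
    (f := fun x => ℓ x + t) ((ℓ.continuous.add continuous_const)).continuousOn
  set n : ℝ := max C 0 with hn
  have key : glinCM K ℓ t c =
      (resL K) (habsCM E ℓ (t + n) c) - (resL K) (ContinuousMap.const E (n • c)) := by
    ext x
    have hb : ‖ℓ (x : E) + t‖ ≤ n := le_trans (hC _ x.2) (le_max_left _ _)
    rw [Real.norm_eq_abs, abs_le] at hb
    have habs : |ℓ (x : E) + (t + n)| = ℓ (x : E) + t + n := by
      rw [abs_of_nonneg (by linarith), add_assoc]
    rw [show ∀ f : C(E, F), resL K f = f.restrict K from fun _ => rfl, show ∀ f : C(E, F), resL K f = f.restrict K from fun _ => rfl]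
    simp only [glinCM, ContinuousMap.coe_mk, ContinuousMap.sub_apply, resL, LinearMap.coe_mk,
      AddHom.coe_mk, ContinuousMap.restrict_apply, habsCM, ContinuousMap.const_apply]
    rw [habs, show (ℓ (x : E) + t + n) • c = (ℓ (x : E) + t) • c + n • c from add_smul _ _ c]
    abel
  rw [key]
  exact Submodule.sub_mem _
    (Submodule.mem_map_of_mem (habs_mem_V hrs hΦ ℓ (t + n) hc))
    (Submodule.mem_map_of_mem (const_mem_V hrs hΦ (n • c)))

lemma habs_mem_Vres (ℓ : E →L[ℝ] ℝ) (t : ℝ) {c : F} (hc : 0 ≤ c) :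
    (resL (F := F) K) (habsCM E ℓ t c) ∈ Vres Φ K :=
  Submodule.mem_map_of_mem (habs_mem_V hrs hΦ ℓ t hc)

lemma relu_mem_Vres (ℓ : E →L[ℝ] ℝ) (t : ℝ) {c : F} (hc : 0 ≤ c) :
    reluCM K ℓ t c ∈ Vres Φ K := by
  have key : reluCM K ℓ t c =
      (2⁻¹ : ℝ) • (glinCM K ℓ t c + (resL K) (habsCM E ℓ t c)) := by
    ext x
    set u : ℝ := ℓ (x : E) + t with hu
    have hmax : max u 0 = 2⁻¹ * (u + |u|) := by
      rcases le_total 0 u with h | h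
      · rw [max_eq_left h, abs_of_nonneg h]; ring
      · rw [max_eq_right h, abs_of_nonpos h]; ring
    rw [show ∀ f : C(E, F), resL K f = f.restrict K from fun _ => rfl]
    simp only [reluCM, glinCM, ContinuousMap.coe_mk, ContinuousMap.smul_apply,
      ContinuousMap.add_apply, resL, LinearMap.coe_mk, AddHom.coe_mk,
      ContinuousMap.restrict_apply, habsCM]
    rw [hmax, mul_smul, ← add_smul]
  rw [key]
  exact Submodule.smul_mem _ _ (Submodule.add_mem _
    (glin_mem_Vres hrs hΦ K ℓ t hc) (habs_mem_Vres hrs hΦ K ℓ t hc))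


variable (Φ) in
/-- closure of the restricted span -/
noncomputable def Wcl : Submodule ℝ C(↥K, F) := (Vres Φ K).topologicalClosure

/-- η (ℓ x) • c on K -/
noncomputable def etaCM (η : C(ℝ, ℝ)) (ℓ : E →L[ℝ] ℝ) (c : F) : C(↥K, F) :=
  ⟨fun x : ↥K => η (ℓ (x : E)) • c,
    (η.continuous.comp (ℓ.continuous.comp continuous_subtype_val)).smul continuous_const⟩

lemma eta_mem_W (η : C(ℝ, ℝ)) (ℓ : E →L[ℝ] ℝ) {c : F} (hc : 0 ≤ c) :
    etaCM K η ℓ c ∈ Wcl Φ K := by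
  obtain ⟨C, hC⟩ := (isCompact_iff_compactSpace.mpr ‹_› : IsCompact K).exists_bound_of_continuousOn
    (f := fun x => ℓ x) ℓ.continuous.continuousOn
  set R : ℝ := max C 0 + 1 with hR
  have hR0 : 0 < R := by positivity
  have hmem : ∀ x : ↥K, ℓ (x : E) ∈ Icc (-R) R := by
    intro x
    have := hC _ x.2
    rw [Real.norm_eq_abs, abs_le] at this
    have h2 : C ≤ max C 0 := le_max_left _ _
    exact ⟨by linarith [this.1], by linarith [this.2]⟩
  rw [Wcl, ← SetLike.mem_coe, Submodule.topologicalClosure_coe]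
  rw [Metric.mem_closure_iff]
  intro ε hε
  set ε' : ℝ := ε / (‖c‖ + 1) with hε'def
  have hc1 : (0:ℝ) < ‖c‖ + 1 := by positivity
  have hε' : 0 < ε' := div_pos hε hc1
  obtain ⟨q, hq, hqb⟩ := pl_approx η hR0 hε'
  set Θ : C(ℝ, ℝ) →ₗ[ℝ] C(↥K, F) :=
    { toFun := fun φ => ⟨fun x : ↥K => φ (ℓ (x : E)) • c,
        (φ.continuous.comp (ℓ.continuous.comp continuous_subtype_val)).smul continuous_const⟩
      map_add' := fun φ ψ => by ext x; simp [add_smul]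
      map_smul' := fun a φ => by ext x; simp [mul_smul] } with hΘ
  have hgen : PLgen ⊆ (Vres Φ K).comap Θ := by
    rintro p (hp | ⟨a, rfl⟩)
    · rcases hp with hp | hp
      · subst hp
        have : Θ 1 = (resL K) (ContinuousMap.const E c) := by
          ext x
          rw [show ∀ f : C(E, F), resL K f = f.restrict K from fun _ => rfl]
          simp [hΘ, resL]
        simp only [SetLike.mem_coe, Submodule.mem_comap, this]
        exact Submodule.mem_map_of_mem (const_mem_V hrs hΦ c)
      · simp only [Set.mem_singleton_iff] at hp
        subst hp
        have : Θ (ContinuousMap.id ℝ) = glinCM K ℓ 0 c := by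
          ext x
          simp [hΘ, glinCM]
        simp only [SetLike.mem_coe, Submodule.mem_comap, this]
        exact glin_mem_Vres hrs hΦ K ℓ 0 hc
    · have : Θ (ppCM a) = reluCM K ℓ (-a) c := by
        ext x
        simp [hΘ, reluCM, ppCM, sub_eq_add_neg]
      simp only [SetLike.mem_coe, Submodule.mem_comap, this]
      exact relu_mem_Vres hrs hΦ K ℓ (-a) hc
  have hq' : Θ q ∈ Vres Φ K := Submodule.span_le.mpr hgen hq
  refine ⟨Θ q, hq', ?_⟩
  have hdle : dist (etaCM K η ℓ c) (Θ q) ≤ ε' * ‖c‖ := by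
    rw [ContinuousMap.dist_le (by positivity)]
    intro x
    have h1 : dist (etaCM K η ℓ c x) (Θ q x) = |η (ℓ (x : E)) - q (ℓ (x : E))| * ‖c‖ := by
      rw [dist_eq_norm]
      have : etaCM K η ℓ c x - Θ q x = (η (ℓ (x : E)) - q (ℓ (x : E))) • c := by
        simp [etaCM, hΘ, sub_smul]
      rw [this, norm_smul, Real.norm_eq_abs]
    rw [h1]
    exact mul_le_mul_of_nonneg_right (hqb _ (hmem x)) (norm_nonneg c)
  calc dist (etaCM K η ℓ c) (Θ q) ≤ ε' * ‖c‖ := hdle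
    _ < ε' * (‖c‖ + 1) := by nlinarith
    _ = ε := by rw [hε'def]; field_simp

/-- φ x • c on K -/
noncomputable def smulCM (φ : C(↥K, ℝ)) (c : F) : C(↥K, F) :=
  ⟨fun x => φ x • c, φ.continuous.smul continuous_const⟩

/-- exp (ℓ x) on K -/
noncomputable def expCM (ℓ : E →L[ℝ] ℝ) : C(↥K, ℝ) :=
  ⟨fun x : ↥K => Real.exp (ℓ (x : E)),
    Real.continuous_exp.comp (ℓ.continuous.comp continuous_subtype_val)⟩

lemma smul_mem_W_of_nonneg (φ : C(↥K, ℝ)) {c : F} (hc : 0 ≤ c) :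
    smulCM K φ c ∈ Wcl Φ K := by
  set Ψ : C(↥K, ℝ) →ₗ[ℝ] C(↥K, F) :=
    { toFun := fun φ => smulCM K φ c
      map_add' := fun φ ψ => by ext x; simp [smulCM, add_smul]
      map_smul' := fun a φ => by ext x; simp [smulCM, mul_smul] } with hΨdef
  have hΨc : Continuous Ψ := by
    apply (LipschitzWith.of_dist_le_mul (K := ‖c‖₊) (f := fun φ => Ψ φ) ?_).continuous
    intro φ ψ
    rw [coe_nnnorm]
    rw [ContinuousMap.dist_le (mul_nonneg (norm_nonneg c) dist_nonneg)]
    intro x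
    have : dist (Ψ φ x) (Ψ ψ x) = dist (φ x) (ψ x) * ‖c‖ := by
      simp only [hΨdef, smulCM, LinearMap.coe_mk, AddHom.coe_mk, ContinuousMap.coe_mk]
      rw [dist_eq_norm, ← sub_smul, norm_smul, Real.norm_eq_abs, Real.dist_eq]
    rw [this, mul_comm (dist (φ x) (ψ x)) ‖c‖]
    exact mul_le_mul_of_nonneg_left (ContinuousMap.dist_apply_le_dist x) (norm_nonneg c)
  set eSet : Set C(↥K, ℝ) := Set.range (fun ℓ : E →L[ℝ] ℝ => expCM K ℓ) with heSet
  have hmonsub : (Submonoid.closure eSet : Set C(↥K, ℝ)) ⊆ eSet := by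
    intro z hz
    induction hz using Submonoid.closure_induction with
    | mem x hx => exact hx
    | one => exact Set.mem_range.mpr ⟨0, by ext x; simp [expCM]⟩
    | mul x y _ _ hx hy =>
      obtain ⟨ℓ₁, rfl⟩ := hx
      obtain ⟨ℓ₂, rfl⟩ := hy
      exact Set.mem_range.mpr ⟨ℓ₁ + ℓ₂, by ext x; simp [expCM, Real.exp_add]⟩
  set A : Subalgebra ℝ C(↥K, ℝ) := Algebra.adjoin ℝ eSet with hA
  have hsep : A.SeparatesPoints := by
    intro x y hxy
    have hxy' : (x : E) ≠ (y : E) := fun h => hxy (Subtype.ext h)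
    obtain ⟨ℓ, hℓ⟩ := SeparatingDual.exists_separating_of_ne (R := ℝ) hxy'
    refine ⟨_, Set.mem_image_of_mem _ (show expCM K ℓ ∈ A from ?_),
      (fun h => hℓ (Real.exp_injective h) : (expCM K ℓ) x ≠ (expCM K ℓ) y)⟩
    rw [hA]
    exact Algebra.subset_adjoin (Set.mem_range.mpr ⟨ℓ, rfl⟩)
  have htop : A.topologicalClosure = ⊤ :=
    ContinuousMap.subalgebra_topologicalClosure_eq_top_of_separatesPoints A hsep
  have hφA : φ ∈ closure (A : Set C(↥K, ℝ)) := by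
    rw [← Subalgebra.topologicalClosure_coe, htop]
    trivial
  have hAW : ∀ a ∈ (A : Set C(↥K, ℝ)), Ψ a ∈ Wcl Φ K := by
    intro a ha
    have ha' : a ∈ Submodule.span ℝ eSet := by
      have h1 : a ∈ Subalgebra.toSubmodule (Algebra.adjoin ℝ eSet) := ha
      rw [Algebra.adjoin_eq_span] at h1
      exact Submodule.span_mono hmonsub h1
    have hgen : eSet ⊆ (Wcl Φ K).comap Ψ := by
      rintro p ⟨ℓ, rfl⟩
      have : Ψ (expCM K ℓ) = etaCM K ⟨Real.exp, Real.continuous_exp⟩ ℓ c := by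
        ext x; rfl
      simp only [SetLike.mem_coe, Submodule.mem_comap, this]
      exact eta_mem_W hrs hΦ K _ ℓ hc
    exact Submodule.span_le.mpr hgen ha'
  have h1 : Ψ φ ∈ closure (Ψ '' (A : Set C(↥K, ℝ))) :=
    image_closure_subset_closure_image hΨc ⟨φ, hφA, rfl⟩
  have h2 : closure (Ψ '' (A : Set C(↥K, ℝ))) ⊆ (Wcl Φ K : Set C(↥K, F)) := by
    apply closure_minimal
    · rintro _ ⟨a, ha, rfl⟩
      exact hAW a ha
    · exact Submodule.isClosed_topologicalClosure _
  exact h2 h1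

lemma smul_mem_W (φ : C(↥K, ℝ)) (c : F) : smulCM K φ c ∈ Wcl Φ K := by
  have key : smulCM K φ c = smulCM K φ (c⁺) - smulCM K φ (c⁻) := by
    ext x
    simp only [smulCM, ContinuousMap.coe_mk, ContinuousMap.sub_apply]
    rw [← smul_sub, posPart_sub_negPart]
  rw [key]
  exact Submodule.sub_mem _ (smul_mem_W_of_nonneg hrs hΦ K φ (posPart_nonneg c))
    (smul_mem_W_of_nonneg hrs hΦ K φ (negPart_nonneg c))


lemma Wcl_eq_top : Wcl Φ K = ⊤ := by
  rw [eq_top_iff]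
  intro f _
  have hclosed : IsClosed ((Wcl Φ K : Submodule ℝ C(↥K, F)) : Set C(↥K, F)) :=
    Submodule.isClosed_topologicalClosure _
  rw [← SetLike.mem_coe, ← hclosed.closure_eq, Metric.mem_closure_iff]
  intro ε hε
  set U : ↥K → Set ↥K := fun x => {y | dist (f y) (f x) < ε / 2} with hU
  have hUopen : ∀ x, IsOpen (U x) := fun x =>
    isOpen_lt ((map_continuous f).dist continuous_const) continuous_const
  have hUnhd : ∀ x, U x ∈ nhds x := fun x => (hUopen x).mem_nhds (by simp [hU]; positivity)
  obtain ⟨t, ht⟩ := CompactSpace.elim_nhds_subcover U hUnhd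
  have hcover : (univ : Set ↥K) ⊆ ⋃ i : {x // x ∈ t}, U ↑i := by
    intro y _
    have hy : y ∈ ⋃ x ∈ t, U x := by rw [ht]; trivial
    simp only [Set.mem_iUnion] at hy ⊢
    obtain ⟨x, hx, hyx⟩ := hy
    exact ⟨⟨x, hx⟩, hyx⟩
  obtain ⟨ρ, hρ⟩ := PartitionOfUnity.exists_isSubordinate (ι := {x // x ∈ t})
    isClosed_univ (fun i => U ↑i) (fun i => hUopen _) hcover
  set g : C(↥K, F) := ∑ i : {x // x ∈ t}, smulCM K (ρ i) (f ↑i) with hg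
  have hgW : g ∈ Wcl Φ K :=
    Submodule.sum_mem _ (fun i _ => smul_mem_W hrs hΦ K (ρ i) (f ↑i))
  refine ⟨g, hgW, ?_⟩
  have hd : dist f g ≤ ε / 2 := by
    rw [ContinuousMap.dist_le (by positivity)]
    intro y
    have hsum1 : ∑ i : {x // x ∈ t}, ρ i y = 1 := by
      have := ρ.sum_eq_one (Set.mem_univ y)
      rwa [finsum_eq_sum_of_fintype] at this
    have hfy : f y = ∑ i : {x // x ∈ t}, ρ i y • f y := by
      rw [← Finset.sum_smul, hsum1, one_smul]
    have hgy : g y = ∑ i : {x // x ∈ t}, ρ i y • f ↑i := by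
      rw [hg, ContinuousMap.sum_apply]
      rfl
    rw [dist_eq_norm, hfy, hgy, ← Finset.sum_sub_distrib]
    calc ‖∑ i : {x // x ∈ t}, (ρ i y • f y - ρ i y • f ↑i)‖
        ≤ ∑ i : {x // x ∈ t}, ‖ρ i y • f y - ρ i y • f ↑i‖ := norm_sum_le _ _
      _ ≤ ∑ i : {x // x ∈ t}, ρ i y * (ε / 2) := by
          apply Finset.sum_le_sum
          intro i _
          rw [← smul_sub, norm_smul, Real.norm_eq_abs, abs_of_nonneg (ρ.nonneg i y)]
          rcases eq_or_lt_of_le (ρ.nonneg i y) with h0 | h0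
          · rw [← h0]; simp
          · apply mul_le_mul_of_nonneg_left _ (ρ.nonneg i y)
            have hyU : y ∈ U ↑i :=
              hρ i (subset_tsupport _ (Function.mem_support.mpr h0.ne'))
            rw [← dist_eq_norm]
            exact le_of_lt hyU
      _ = (∑ i : {x // x ∈ t}, ρ i y) * (ε / 2) := by rw [Finset.sum_mul]
      _ = ε / 2 := by rw [hsum1, one_mul]
  exact lt_of_le_of_lt hd (by linarith)

end CompactPart

theorem dense_Vspan : Dense ((Vspan E Φ : Submodule ℝ C(E, F)) : Set C(E, F)) := by
  rw [dense_iff_closure_eq, Set.eq_univ_iff_forall]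
  intro f
  rw [mem_closure_iff_nhds_basis
    (nhds_basis_uniformity' ContinuousMap.hasBasis_compactConvergenceUniformity)]
  rintro ⟨Kset, Vent⟩ ⟨hKc, hVent⟩
  obtain ⟨ε, hε, hεV⟩ := Metric.mem_uniformity_dist.mp hVent
  haveI : CompactSpace ↥Kset := isCompact_iff_compactSpace.mp hKc
  have hW := Wcl_eq_top hrs hΦ Kset
  have hf : f.restrict Kset ∈ closure ((Vres Φ Kset : Submodule ℝ C(↥Kset, F)) : Set _) := by
    rw [← Submodule.topologicalClosure_coe,
      show (Vres Φ Kset).topologicalClosure = Wcl Φ Kset from rfl, hW]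
    trivial
  obtain ⟨g', hg'V, hg'd⟩ := Metric.mem_closure_iff.mp hf ε hε
  obtain ⟨g, hgV, rfl⟩ := Submodule.mem_map.mp hg'V
  refine ⟨g, hgV, ?_⟩
  intro x hx
  apply hεV
  calc dist (f x) (g x) = dist (f.restrict Kset ⟨x, hx⟩) ((resL Kset g) ⟨x, hx⟩) := rfl
    _ ≤ dist (f.restrict Kset) (resL Kset g) := ContinuousMap.dist_apply_le_dist _
    _ < ε := hg'd

end Main

/-- Let `E` be a locally convex Hausdorff real topological vector
space, `F` a real Banach lattice, and `Φ(f) = r•f⁺ + s•f⁻` with `s ≠ -r`. Then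
`span {Φ ∘ g : g ∈ Aff(E,F)}` is dense in `C(E,F)` with the compact-open topology; in
particular the sublattice of `C(E,F)` generated by `Aff(E,F)` is dense. -/
theorem stmt_14 (E : Type*) [AddCommGroup E] [Module ℝ E] [TopologicalSpace E]
    [IsTopologicalAddGroup E] [ContinuousSMul ℝ E] [LocallyConvexSpace ℝ E] [T2Space E]
    (F : Type*) [NormedAddCommGroup F] [Lattice F] [IsOrderedAddMonoid F] [HasSolidNorm F] [CompleteSpace F] [NormedSpace ℝ F]
    [PosSMulStrictMono ℝ F] [PosSMulReflectLT ℝ F]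
    (r s : ℝ) (hrs : s ≠ -r)
    (Φ : F → F) (hΦ : ∀ f : F, Φ f = r • (f ⊔ 0) + s • ((-f) ⊔ 0)) :
    Dense (↑(Submodule.span ℝ
        {h : C(E, F) | ∃ (T : E →L[ℝ] F) (b : F), ∀ x : E, h x = Φ (T x + b)}) :
        Set C(E, F)) ∧
      Dense (⋂₀ {S : Set C(E, F) |
        {h : C(E, F) | ∃ (T : E →L[ℝ] F) (b : F), ∀ x : E, h x = T x + b} ⊆ S ∧
        (∀ x ∈ S, ∀ y ∈ S, x + y ∈ S) ∧ (∀ (c : ℝ), ∀ x ∈ S, c • x ∈ S) ∧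
        (∀ x ∈ S, ∀ y ∈ S, x ⊔ y ∈ S) ∧ (∀ x ∈ S, ∀ y ∈ S, x ⊓ y ∈ S)}) := by
  have hdense : Dense ((Vspan E Φ : Submodule ℝ C(E, F)) : Set C(E, F)) :=
    dense_Vspan hrs hΦ
  refine ⟨hdense, hdense.mono ?_⟩
  intro h hh
  rw [Set.mem_sInter]
  rintro S ⟨hAff, hadd, hsmul, hsup, hinf⟩
  have h0S : (0 : C(E, F)) ∈ S := hAff ⟨0, 0, by intro x; simp⟩
  have hM : ∀ g ∈ {h : C(E, F) | ∃ (T : E →L[ℝ] F) (b : F), ∀ x : E, h x = Φ (T x + b)},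
      g ∈ S := by
    rintro g ⟨T, b, hTb⟩
    set ga : C(E, F) := ⟨fun x => T x + b, T.continuous.add continuous_const⟩ with hga
    have hgaS : ga ∈ S := hAff ⟨T, b, fun x => rfl⟩
    have hkey : g = r • (ga ⊔ 0) + s • (((-1 : ℝ) • ga) ⊔ 0) := by
      ext x
      rw [hTb x, hΦ]
      simp [hga]
    rw [hkey]
    exact hadd _ (hsmul r _ (hsup _ hgaS _ h0S)) _
      (hsmul s _ (hsup _ (hsmul (-1) _ hgaS) _ h0S))
  have hh' : h ∈ Vspan E Φ := hh
  clear hh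
  induction hh' using Submodule.span_induction with
  | mem z hz => exact hM z hz
  | zero => exact h0S
  | add x y _ _ hx hy => exact hadd x hx y hy
  | smul c x _ hx => exact hsmul c x hx
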